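/- Let (ζ*, β*) minimize the ODM dual objective d over the nonnegative orthant, and let (ζ̃*, β̃*) minimize the approximate dual objective d̃ over the nonnegative orthant. Set α* = [ζ*; β*] ∈ ℝ^{2M}, α̃* = [ζ̃*; β̃*] ∈ ℝ^{2M}, U = max(‖α*‖_∞, ‖α̃*‖_∞) and Q̂ = Σ_{i,j : P(i) ≠ P(j)} |Q_{ij}|. Then ‖α̃* − α*‖² ≤ (U²/(Mcυ)) · (Q̂ + M(M − m)c). -/

import Mathlib

open Finset

private def QF {n : ℕ} (G : Fin n → Fin n → ℝ) (u v : Fin n → ℝ) : ℝ :=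
  ∑ i, ∑ j, u i * v j * G i j

private lemma QF_expand {n : ℕ} (G : Fin n → Fin n → ℝ) (u v : Fin n → ℝ) (t : ℝ) :
    QF G (fun i => u i + t * v i) (fun i => u i + t * v i)
      = QF G u u + t * (QF G v u + QF G u v) + t ^ 2 * QF G v v := by
  simp only [QF, Finset.mul_sum, mul_add, ← Finset.sum_add_distrib]
  refine Finset.sum_congr rfl fun i _ => ?_
  refine Finset.sum_congr rfl fun j _ => ?_
  ring

private lemma QF_swap {n : ℕ} (G : Fin n → Fin n → ℝ) (hG : ∀ i j, G j i = G i j)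
    (u v : Fin n → ℝ) : QF G u v = QF G v u := by
  rw [QF, Finset.sum_comm]
  refine Finset.sum_congr rfl fun j _ => Finset.sum_congr rfl fun i _ => ?_
  rw [← hG j i]; ring

private lemma QF_add_right {n : ℕ} (G : Fin n → Fin n → ℝ) (x u v : Fin n → ℝ) :
    QF G x (fun i => u i + v i) = QF G x u + QF G x v := by
  simp only [QF, ← Finset.sum_add_distrib]
  exact Finset.sum_congr rfl fun i _ => Finset.sum_congr rfl fun j _ => by ring

private lemma QF_neg_left {n : ℕ} (G : Fin n → Fin n → ℝ) (u v : Fin n → ℝ) :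
    QF G (fun i => -u i) v = -QF G u v := by
  have h : ∀ i j : Fin n, (-u i) * v j * G i j = -(u i * v j * G i j) := fun i j => by ring
  simp only [QF, h, Finset.sum_neg_distrib]

private lemma QF_ker_split {n : ℕ} (G G₁ G₂ : Fin n → Fin n → ℝ)
    (h : ∀ i j, G i j = G₁ i j + G₂ i j) (u v : Fin n → ℝ) :
    QF G u v = QF G₁ u v + QF G₂ u v := by
  simp only [QF, ← Finset.sum_add_distrib]
  exact Finset.sum_congr rfl fun i _ => Finset.sum_congr rfl fun j _ => by rw [h]; ring

private lemma QF_psd {n : ℕ} (Q : Matrix (Fin n) (Fin n) ℝ) (hQ : Q.PosSemidef)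
    (v : Fin n → ℝ) : 0 ≤ QF (fun i j => Q i j) v v := by
  have h := hQ.dotProduct_mulVec_nonneg v
  simp only [dotProduct, Matrix.mulVec, star_trivial] at h
  calc (0:ℝ) ≤ ∑ i, v i * ∑ j, Q i j * v j := h
    _ = QF (fun i j => Q i j) v v := by
        refine Finset.sum_congr rfl fun i _ => ?_
        rw [Finset.mul_sum]
        exact Finset.sum_congr rfl fun j _ => by ring

private lemma QF_blockdiag_psd {n K : ℕ} (Q : Matrix (Fin n) (Fin n) ℝ)
    (hQ : Q.PosSemidef) (P : Fin n → Fin K) (v : Fin n → ℝ) :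
    0 ≤ QF (fun i j => if P i = P j then Q i j else 0) v v := by
  have key : QF (fun i j => if P i = P j then Q i j else 0) v v
      = ∑ k : Fin K, QF (fun i j => Q i j)
          (fun i => if P i = k then v i else 0) (fun i => if P i = k then v i else 0) := by
    simp only [QF]
    symm
    rw [Finset.sum_comm]
    refine Finset.sum_congr rfl fun i _ => ?_
    rw [Finset.sum_comm]
    refine Finset.sum_congr rfl fun j _ => ?_
    by_cases h : P i = P j
    · rw [if_pos h, Finset.sum_eq_single (P i)]
      · simp [← h]
      · intro k _ hk
        rw [if_neg (fun hh : P i = k => hk hh.symm), zero_mul, zero_mul]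
      · intro hk
        exact absurd (Finset.mem_univ _) hk
    · rw [if_neg h, mul_zero]
      refine Finset.sum_eq_zero fun k _ => ?_
      by_cases h1 : P i = k
      · rw [if_neg (fun hh : P j = k => h (h1.trans hh.symm)), mul_zero, zero_mul]
      · rw [if_neg h1, zero_mul, zero_mul]
  rw [key]
  exact Finset.sum_nonneg fun k _ => QF_psd Q hQ _

private lemma sum_sq_expand {n : ℕ} (u v : Fin n → ℝ) (t : ℝ) :
    ∑ i, (u i + t * v i) ^ 2
      = ∑ i, (u i) ^ 2 + t * (2 * ∑ i, u i * v i) + t ^ 2 * ∑ i, (v i) ^ 2 := by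
  simp only [Finset.mul_sum, ← Finset.sum_add_distrib]
  exact Finset.sum_congr rfl fun i _ => by ring

private lemma sum_lin_expand {n : ℕ} (u v : Fin n → ℝ) (t : ℝ) :
    ∑ i, (u i + t * v i) = ∑ i, u i + t * ∑ i, v i := by
  simp only [Finset.mul_sum, ← Finset.sum_add_distrib]

set_option maxHeartbeats 3200000 in
/-- Theorem 1 (solution gap) of "Scalable Optimal Margin Distribution Machine":
if `αs = [ζs; βs]` minimizes the ODM dual objective `d` over the nonnegative orthant
and `αt = [ζt; βt]` minimizes the block-diagonal approximate dual objective `dt` over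
the nonnegative orthant, then `‖αt - αs‖² ≤ (U²/(M c υ)) (Q̂ + M (M - m) c)`. -/
theorem sodm_solution_gap
    (M K m : ℕ) (c υ θ : ℝ)
    (hc : 0 < c) (hυ0 : 0 < υ) (hυ1 : υ ≤ 1) (hθ0 : 0 ≤ θ) (hθ1 : θ < 1)
    (Q : Matrix (Fin M) (Fin M) ℝ) (hQ : Q.PosSemidef)
    (P : Fin M → Fin K) (hM : M = K * m)
    (hfiber : ∀ k : Fin K, (Finset.univ.filter fun i => P i = k).card = m)
    (d dt : (Fin M → ℝ) → (Fin M → ℝ) → ℝ)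
    (hd : ∀ ζ β : Fin M → ℝ, d ζ β =
      (1/2) * ∑ i, ∑ j, (ζ i - β i) * (ζ j - β j) * Q i j
      + ((M : ℝ) * c / 2) * (υ * ∑ i, (ζ i)^2 + ∑ i, (β i)^2)
      + (θ - 1) * ∑ i, ζ i + (θ + 1) * ∑ i, β i)
    (hdt : ∀ ζ β : Fin M → ℝ, dt ζ β =
      (1/2) * ∑ i, ∑ j, (ζ i - β i) * (ζ j - β j) * (if P i = P j then Q i j else 0)
      + ((m : ℝ) * c / 2) * (υ * ∑ i, (ζ i)^2 + ∑ i, (β i)^2)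
      + (θ - 1) * ∑ i, ζ i + (θ + 1) * ∑ i, β i)
    (ζs βs ζt βt : Fin M → ℝ)
    (hζs : ∀ i, 0 ≤ ζs i) (hβs : ∀ i, 0 ≤ βs i)
    (hζt : ∀ i, 0 ≤ ζt i) (hβt : ∀ i, 0 ≤ βt i)
    (hmin : ∀ ζ β : Fin M → ℝ, (∀ i, 0 ≤ ζ i) → (∀ i, 0 ≤ β i) → d ζs βs ≤ d ζ β)
    (hmint : ∀ ζ β : Fin M → ℝ, (∀ i, 0 ≤ ζ i) → (∀ i, 0 ≤ β i) → dt ζt βt ≤ dt ζ β)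
    (U Qhat : ℝ)
    (hU : U = max ‖Sum.elim ζs βs‖ ‖Sum.elim ζt βt‖)
    (hQhat : Qhat = ∑ i, ∑ j, if P i ≠ P j then |Q i j| else 0) :
    ∑ x : Fin M ⊕ Fin M, (Sum.elim ζt βt x - Sum.elim ζs βs x)^2 ≤
      (U^2 / ((M : ℝ) * c * υ)) * (Qhat + (M : ℝ) * ((M : ℝ) - (m : ℝ)) * c) := by
  -- Trivial case `M = 0`
  rcases Nat.eq_zero_or_pos M with hM0 | hMpos
  · subst hM0
    simp only [Nat.cast_zero, zero_mul, div_zero, Finset.univ_eq_empty, Finset.sum_empty,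
      le_refl]
  -- Main case `0 < M`
  have hm1 : 1 ≤ m := by
    rcases Nat.eq_zero_or_pos m with h | h
    · rw [h, Nat.mul_zero] at hM; omega
    · exact h
  have hK1 : 1 ≤ K := by
    rcases Nat.eq_zero_or_pos K with h | h
    · rw [h, Nat.zero_mul] at hM; omega
    · exact h
  have hmM : m ≤ M := by
    calc m = 1 * m := (one_mul m).symm
    _ ≤ K * m := Nat.mul_le_mul_right m hK1
    _ = M := hM.symm
  have hMR : (0:ℝ) < (M:ℝ) := by exact_mod_cast hMpos
  have hmR : (0:ℝ) < (m:ℝ) := by exact_mod_cast hm1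
  have hmMR : (m:ℝ) ≤ (M:ℝ) := by exact_mod_cast hmM
  have hU0 : 0 ≤ U := hU ▸ le_trans (norm_nonneg _) (le_max_left _ _)
  have hzsU : ∀ i, ζs i ≤ U := by
    intro i
    have h1 : |ζs i| ≤ ‖Sum.elim ζs βs‖ := by
      have := norm_le_pi_norm (Sum.elim ζs βs) (Sum.inl i)
      simpa using this
    calc ζs i ≤ |ζs i| := le_abs_self _
    _ ≤ ‖Sum.elim ζs βs‖ := h1
    _ ≤ U := hU ▸ le_max_left _ _
  have hbsU : ∀ i, βs i ≤ U := by
    intro i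
    have h1 : |βs i| ≤ ‖Sum.elim ζs βs‖ := by
      have := norm_le_pi_norm (Sum.elim ζs βs) (Sum.inr i)
      simpa using this
    calc βs i ≤ |βs i| := le_abs_self _
    _ ≤ ‖Sum.elim ζs βs‖ := h1
    _ ≤ U := hU ▸ le_max_left _ _
  have hztU : ∀ i, ζt i ≤ U := by
    intro i
    have h1 : |ζt i| ≤ ‖Sum.elim ζt βt‖ := by
      have := norm_le_pi_norm (Sum.elim ζt βt) (Sum.inl i)
      simpa using this
    calc ζt i ≤ |ζt i| := le_abs_self _
    _ ≤ ‖Sum.elim ζt βt‖ := h1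
    _ ≤ U := hU ▸ le_max_right _ _
  have hbtU : ∀ i, βt i ≤ U := by
    intro i
    have h1 : |βt i| ≤ ‖Sum.elim ζt βt‖ := by
      have := norm_le_pi_norm (Sum.elim ζt βt) (Sum.inr i)
      simpa using this
    calc βt i ≤ |βt i| := le_abs_self _
    _ ≤ ‖Sum.elim ζt βt‖ := h1
    _ ≤ U := hU ▸ le_max_right _ _
  have hQsym : ∀ i j, Q j i = Q i j := by
    intro i j
    have h2 := congrFun (congrFun hQ.1 i) j
    simpa [Matrix.conjTranspose_apply] using h2
  -- local definitions
  set Dz : Fin M → ℝ := fun i => ζt i - ζs i with hDzdef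
  set Db : Fin M → ℝ := fun i => βt i - βs i with hDbdef
  set w : Fin M → ℝ := fun i => ζs i - βs i with hwdef
  set wt : Fin M → ℝ := fun i => ζt i - βt i with hwtdef
  set dl : Fin M → ℝ := fun i => wt i - w i with hdldef
  set Ez : Fin M → ℝ := fun i => ζs i - ζt i with hEzdef
  set Eb : Fin M → ℝ := fun i => βs i - βt i with hEbdef
  set El : Fin M → ℝ := fun i => w i - wt i with hEldef
  set Qm : Fin M → Fin M → ℝ := fun i j => Q i j with hQmdef
  set Qt : Fin M → Fin M → ℝ := fun i j => if P i = P j then Q i j else 0 with hQtdef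
  set Rm : Fin M → Fin M → ℝ := fun i j => if P i = P j then 0 else Q i j with hRmdef
  have hQmsym : ∀ i j, Qm j i = Qm i j := by
    intro i j; simp only [hQmdef]; exact hQsym i j
  have hQtsym : ∀ i j, Qt j i = Qt i j := by
    intro i j; simp only [hQtdef]
    by_cases h : P i = P j
    · rw [if_pos h, if_pos h.symm]; exact hQsym i j
    · rw [if_neg h, if_neg (fun hh => h hh.symm)]
  have hRmsym : ∀ i j, Rm j i = Rm i j := by
    intro i j; simp only [hRmdef]
    by_cases h : P i = P j
    · rw [if_pos h, if_pos h.symm]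
    · rw [if_neg h, if_neg (fun hh => h hh.symm)]; exact hQsym i j
  have hker : ∀ i j, Qm i j = Qt i j + Rm i j := by
    intro i j; simp only [hQmdef, hQtdef, hRmdef]
    by_cases h : P i = P j <;> simp [h]
  have hB : 0 ≤ QF Qm dl dl := by
    rw [hQmdef]; exact QF_psd Q hQ dl
  have hA : 0 ≤ QF Qt dl dl := by
    rw [hQtdef]; exact QF_blockdiag_psd Q hQ P dl
  -- complementarity at the dt-minimizer
  have hcomp : ∀ i, ζt i = 0 ∨ βt i = 0 := by
    intro i
    by_contra hcon
    push_neg at hcon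
    have ha' : 0 < ζt i := lt_of_le_of_ne (hζt i) (Ne.symm hcon.1)
    have hb2' : 0 < βt i := lt_of_le_of_ne (hβt i) (Ne.symm hcon.2)
    have hmc : 0 < (m:ℝ)*c := mul_pos hmR hc
    have hnum : 0 < υ * ζt i + βt i := by
      have := mul_pos hυ0 ha'
      linarith only [this, hb2']
    set t0 : ℝ := min (min (ζt i) (βt i)) ((υ * ζt i + βt i)/(1+υ)) with ht0def
    have ht0p : 0 < t0 := lt_min (lt_min ha' hb2') (div_pos hnum (by linarith only [hυ0]))
    have ht0a : t0 ≤ ζt i := le_trans (min_le_left _ _) (min_le_left _ _)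
    have ht0b : t0 ≤ βt i := le_trans (min_le_left _ _) (min_le_right _ _)
    have ht0c : (1+υ) * t0 ≤ υ * ζt i + βt i := by
      have h1 : t0 ≤ (υ * ζt i + βt i)/(1+υ) := min_le_right _ _
      have h2 : (0:ℝ) < 1 + υ := by linarith only [hυ0]
      calc (1+υ) * t0 ≤ (1+υ) * ((υ * ζt i + βt i)/(1+υ)) :=
            mul_le_mul_of_nonneg_left h1 h2.le
        _ = υ * ζt i + βt i := by field_simp
    have hz'nn : ∀ j, 0 ≤ ζt j - (if j = i then t0 else 0) := by
      intro j; by_cases h : j = i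
      · rw [if_pos h, h]; linarith only [ht0a]
      · rw [if_neg h]; simpa using hζt j
    have hb'nn : ∀ j, 0 ≤ βt j - (if j = i then t0 else 0) := by
      intro j; by_cases h : j = i
      · rw [if_pos h, h]; linarith only [ht0b]
      · rw [if_neg h]; simpa using hβt j
    have hval : dt (fun j => ζt j - (if j = i then t0 else 0))
        (fun j => βt j - (if j = i then t0 else 0))
        = dt ζt βt + (((m:ℝ)*c/2) * (υ * (t0^2 - 2 * ζt i * t0) + (t0^2 - 2 * βt i * t0))
            - 2*θ*t0) := by
      rw [hdt (fun j => ζt j - (if j = i then t0 else 0))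
        (fun j => βt j - (if j = i then t0 else 0)), hdt ζt βt]
      have hq : ∑ p, ∑ q, (ζt p - (if p = i then t0 else 0) - (βt p - (if p = i then t0 else 0)))
            * (ζt q - (if q = i then t0 else 0) - (βt q - (if q = i then t0 else 0)))
            * (if P p = P q then Q p q else 0)
          = ∑ p, ∑ q, (ζt p - βt p) * (ζt q - βt q) * (if P p = P q then Q p q else 0) := by
        refine Finset.sum_congr rfl fun p _ => Finset.sum_congr rfl fun q _ => ?_
        have e1 : ζt p - (if p = i then t0 else 0) - (βt p - (if p = i then t0 else 0))
            = ζt p - βt p := by ring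
        have e2 : ζt q - (if q = i then t0 else 0) - (βt q - (if q = i then t0 else 0))
            = ζt q - βt q := by ring
        rw [e1, e2]
      have h2 : ∑ j, (ζt j - (if j = i then t0 else 0))^2
          = ∑ j, (ζt j)^2 + (t0^2 - 2 * ζt i * t0) := by
        have e : ∀ j, (ζt j - (if j = i then t0 else 0))^2
            = (ζt j)^2 + (if j = i then t0^2 - 2 * ζt i * t0 else 0) := by
          intro j; by_cases h : j = i
          · rw [if_pos h, if_pos h, h]; ring
          · rw [if_neg h, if_neg h]; ring
        simp only [e]
        rw [Finset.sum_add_distrib]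
        simp [Finset.sum_ite_eq']
      have h3 : ∑ j, (βt j - (if j = i then t0 else 0))^2
          = ∑ j, (βt j)^2 + (t0^2 - 2 * βt i * t0) := by
        have e : ∀ j, (βt j - (if j = i then t0 else 0))^2
            = (βt j)^2 + (if j = i then t0^2 - 2 * βt i * t0 else 0) := by
          intro j; by_cases h : j = i
          · rw [if_pos h, if_pos h, h]; ring
          · rw [if_neg h, if_neg h]; ring
        simp only [e]
        rw [Finset.sum_add_distrib]
        simp [Finset.sum_ite_eq']
      have h4 : ∑ j, (ζt j - (if j = i then t0 else 0)) = ∑ j, ζt j - t0 := by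
        rw [Finset.sum_sub_distrib]
        simp [Finset.sum_ite_eq']
      have h5 : ∑ j, (βt j - (if j = i then t0 else 0)) = ∑ j, βt j - t0 := by
        rw [Finset.sum_sub_distrib]
        simp [Finset.sum_ite_eq']
      rw [hq, h2, h3, h4, h5]
      ring
    have hge := hmint _ _ hz'nn hb'nn
    rw [hval] at hge
    have hDneg : ((m:ℝ)*c/2) * (υ * (t0^2 - 2 * ζt i * t0) + (t0^2 - 2 * βt i * t0))
        - 2*θ*t0 < 0 := by
      have k1 : (1+υ) * t0 * t0 ≤ (υ * ζt i + βt i) * t0 :=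
        mul_le_mul_of_nonneg_right ht0c ht0p.le
      have k2 : 0 < (υ * ζt i + βt i) * t0 := mul_pos hnum ht0p
      have k3 : 0 ≤ θ * t0 := mul_nonneg hθ0 ht0p.le
      have expand : υ * (t0^2 - 2 * ζt i * t0) + (t0^2 - 2 * βt i * t0)
          = (1+υ) * t0 * t0 - 2 * ((υ * ζt i + βt i) * t0) := by ring
      rw [expand]
      have k4 : (1+υ) * t0 * t0 - 2 * ((υ * ζt i + βt i) * t0)
          ≤ - ((υ * ζt i + βt i) * t0) := by linarith only [k1]
      have k5 : ((m:ℝ)*c/2) * ((1+υ) * t0 * t0 - 2 * ((υ * ζt i + βt i) * t0))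
          ≤ ((m:ℝ)*c/2) * (- ((υ * ζt i + βt i) * t0)) :=
        mul_le_mul_of_nonneg_left k4 (by linarith only [hmc])
      have k6 : ((m:ℝ)*c/2) * (- ((υ * ζt i + βt i) * t0)) < 0 := by
        have := mul_pos hmc k2
        linarith only [this]
      linarith only [k5, k6, k3]
    linarith only [hge, hDneg]
  -- first-order condition for d at (ζs, βs)
  set L1 : ℝ := (1/2) * (QF Qm dl w + QF Qm w dl)
      + ((M:ℝ)*c/2) * (υ * (2 * ∑ i, ζs i * Dz i) + 2 * ∑ i, βs i * Db i)
      + (θ-1) * ∑ i, Dz i + (θ+1) * ∑ i, Db i with hL1def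
  set S1 : ℝ := (1/2) * QF Qm dl dl
      + ((M:ℝ)*c/2) * (υ * ∑ i, (Dz i)^2 + ∑ i, (Db i)^2) with hS1def
  have hS1nn : 0 ≤ S1 := by
    rw [hS1def]
    have h2 : 0 ≤ ∑ i, (Dz i)^2 := Finset.sum_nonneg fun i _ => sq_nonneg _
    have h3 : 0 ≤ ∑ i, (Db i)^2 := Finset.sum_nonneg fun i _ => sq_nonneg _
    have h4 : (0:ℝ) ≤ (M:ℝ)*c/2 := by positivity
    have h5 : (0:ℝ) ≤ υ := hυ0.le
    have h6 : 0 ≤ υ * ∑ i, (Dz i)^2 + ∑ i, (Db i)^2 := add_nonneg (mul_nonneg h5 h2) h3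
    have h7 := mul_nonneg h4 h6
    linarith only [hB, h7]
  have hkey1 : ∀ t : ℝ, 0 < t → t ≤ 1 → 0 ≤ t * L1 + t^2 * S1 := by
    intro t ht0 ht1
    have hz' : ∀ i, 0 ≤ ζs i + t * Dz i := by
      intro i
      have h1 := hζs i; have h2 := hζt i
      have e : ζs i + t * Dz i = (1 - t) * ζs i + t * ζt i := by
        simp only [hDzdef]; ring
      rw [e]
      have h3 : (0:ℝ) ≤ 1 - t := by linarith only [ht1]
      exact add_nonneg (mul_nonneg h3 h1) (mul_nonneg ht0.le h2)
    have hb' : ∀ i, 0 ≤ βs i + t * Db i := by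
      intro i
      have h1 := hβs i; have h2 := hβt i
      have e : βs i + t * Db i = (1 - t) * βs i + t * βt i := by
        simp only [hDbdef]; ring
      rw [e]
      have h3 : (0:ℝ) ≤ 1 - t := by linarith only [ht1]
      exact add_nonneg (mul_nonneg h3 h1) (mul_nonneg ht0.le h2)
    have h := hmin (fun i => ζs i + t * Dz i) (fun i => βs i + t * Db i) hz' hb'
    rw [hd ζs βs, hd (fun i => ζs i + t * Dz i) (fun i => βs i + t * Db i)] at h
    have q0 : ∑ i, ∑ j, (ζs i - βs i) * (ζs j - βs j) * Q i j = QF Qm w w := by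
      simp only [QF, hQmdef, hwdef]
    have q1 : ∑ i, ∑ j, (ζs i + t * Dz i - (βs i + t * Db i)) * (ζs j + t * Dz j - (βs j + t * Db j)) * Q i j
        = QF Qm w w + t * (QF Qm dl w + QF Qm w dl) + t^2 * QF Qm dl dl := by
      have h0 : ∀ i, ζs i + t * Dz i - (βs i + t * Db i) = w i + t * dl i := by
        intro i; simp only [hwdef, hdldef, hwtdef, hDzdef, hDbdef]; ring
      have step : ∑ i, ∑ j, (ζs i + t * Dz i - (βs i + t * Db i)) * (ζs j + t * Dz j - (βs j + t * Db j)) * Q i j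
          = QF Qm (fun i => w i + t * dl i) (fun i => w i + t * dl i) := by
        simp only [QF, hQmdef]
        exact Finset.sum_congr rfl fun i _ => Finset.sum_congr rfl fun j _ => by
          rw [h0 i, h0 j]
      rw [step]
      exact QF_expand Qm w dl t
    have q2 : ∑ i, (ζs i + t * Dz i)^2
        = ∑ i, (ζs i)^2 + t * (2 * ∑ i, ζs i * Dz i) + t^2 * ∑ i, (Dz i)^2 :=
      sum_sq_expand ζs Dz t
    have q3 : ∑ i, (βs i + t * Db i)^2
        = ∑ i, (βs i)^2 + t * (2 * ∑ i, βs i * Db i) + t^2 * ∑ i, (Db i)^2 :=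
      sum_sq_expand βs Db t
    have q4 : ∑ i, (ζs i + t * Dz i) = ∑ i, ζs i + t * ∑ i, Dz i := sum_lin_expand ζs Dz t
    have q5 : ∑ i, (βs i + t * Db i) = ∑ i, βs i + t * ∑ i, Db i := sum_lin_expand βs Db t
    rw [q0, q1, q2, q3, q4, q5] at h
    simp only [hL1def, hS1def]
    linarith only [h]
  have hL1nn : 0 ≤ L1 := by
    by_contra hneg
    push_neg at hneg
    have hd1 : 0 < (-L1) / (S1 + 1) := div_pos (by linarith only [hneg]) (by linarith only [hS1nn])
    have ht0pos : 0 < min 1 ((-L1) / (S1 + 1)) := lt_min one_pos hd1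
    have hk := hkey1 _ ht0pos (min_le_left _ _)
    have h2 : (min 1 ((-L1) / (S1 + 1))) * S1 ≤ ((-L1) / (S1 + 1)) * S1 :=
      mul_le_mul_of_nonneg_right (min_le_right _ _) hS1nn
    have h3 : ((-L1) / (S1 + 1)) * S1 < -L1 := by
      rw [div_mul_eq_mul_div, div_lt_iff₀ (by linarith only [hS1nn] : (0:ℝ) < S1+1)]
      have hstep := mul_lt_mul_of_pos_left (lt_add_one S1) (by linarith only [hneg] : (0:ℝ) < -L1)
      linarith only [hstep]
    have h4 : L1 + (min 1 ((-L1) / (S1 + 1))) * S1 < 0 := by linarith only [h2, h3, hneg]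
    have h5 := mul_lt_mul_of_pos_left h4 ht0pos
    rw [mul_zero] at h5
    have h6 : (min 1 ((-L1) / (S1 + 1))) * (L1 + (min 1 ((-L1) / (S1 + 1))) * S1)
        = (min 1 ((-L1) / (S1 + 1))) * L1 + (min 1 ((-L1) / (S1 + 1)))^2 * S1 := by
      ring
    rw [h6] at h5
    linarith only [hk, h5]
  -- first-order condition for dt at (ζt, βt)
  set L2 : ℝ := (1/2) * (QF Qt El wt + QF Qt wt El)
      + ((m:ℝ)*c/2) * (υ * (2 * ∑ i, ζt i * Ez i) + 2 * ∑ i, βt i * Eb i)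
      + (θ-1) * ∑ i, Ez i + (θ+1) * ∑ i, Eb i with hL2def
  set S2 : ℝ := (1/2) * QF Qt El El
      + ((m:ℝ)*c/2) * (υ * ∑ i, (Ez i)^2 + ∑ i, (Eb i)^2) with hS2def
  have hElneg : El = fun i => -dl i := by
    funext i; simp only [hEldef, hdldef]; ring
  have hS2nn : 0 ≤ S2 := by
    rw [hS2def]
    have h1 : 0 ≤ QF Qt El El := by
      rw [hElneg, QF_swap Qt hQtsym, QF_neg_left, QF_swap Qt hQtsym, QF_neg_left, neg_neg]
      exact hA
    have h2 : 0 ≤ ∑ i, (Ez i)^2 := Finset.sum_nonneg fun i _ => sq_nonneg _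
    have h3 : 0 ≤ ∑ i, (Eb i)^2 := Finset.sum_nonneg fun i _ => sq_nonneg _
    have h4 : (0:ℝ) ≤ (m:ℝ)*c/2 := by positivity
    have h5 : (0:ℝ) ≤ υ := hυ0.le
    have h6 : 0 ≤ υ * ∑ i, (Ez i)^2 + ∑ i, (Eb i)^2 := add_nonneg (mul_nonneg h5 h2) h3
    have h7 := mul_nonneg h4 h6
    linarith only [h1, h7]
  have hkey2 : ∀ t : ℝ, 0 < t → t ≤ 1 → 0 ≤ t * L2 + t^2 * S2 := by
    intro t ht0 ht1
    have hz' : ∀ i, 0 ≤ ζt i + t * Ez i := by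
      intro i
      have h1 := hζs i; have h2 := hζt i
      have e : ζt i + t * Ez i = (1 - t) * ζt i + t * ζs i := by
        simp only [hEzdef]; ring
      rw [e]
      have h3 : (0:ℝ) ≤ 1 - t := by linarith only [ht1]
      exact add_nonneg (mul_nonneg h3 h2) (mul_nonneg ht0.le h1)
    have hb' : ∀ i, 0 ≤ βt i + t * Eb i := by
      intro i
      have h1 := hβs i; have h2 := hβt i
      have e : βt i + t * Eb i = (1 - t) * βt i + t * βs i := by
        simp only [hEbdef]; ring
      rw [e]
      have h3 : (0:ℝ) ≤ 1 - t := by linarith only [ht1]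
      exact add_nonneg (mul_nonneg h3 h2) (mul_nonneg ht0.le h1)
    have h := hmint (fun i => ζt i + t * Ez i) (fun i => βt i + t * Eb i) hz' hb'
    rw [hdt ζt βt, hdt (fun i => ζt i + t * Ez i) (fun i => βt i + t * Eb i)] at h
    have q0 : ∑ i, ∑ j, (ζt i - βt i) * (ζt j - βt j) * (if P i = P j then Q i j else 0)
        = QF Qt wt wt := by
      simp only [QF, hQtdef, hwtdef]
    have q1 : ∑ i, ∑ j, (ζt i + t * Ez i - (βt i + t * Eb i)) * (ζt j + t * Ez j - (βt j + t * Eb j)) * (if P i = P j then Q i j else 0)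
        = QF Qt wt wt + t * (QF Qt El wt + QF Qt wt El) + t^2 * QF Qt El El := by
      have h0 : ∀ i, ζt i + t * Ez i - (βt i + t * Eb i) = wt i + t * El i := by
        intro i; simp only [hwtdef, hEldef, hwdef, hEzdef, hEbdef]; ring
      have step : ∑ i, ∑ j, (ζt i + t * Ez i - (βt i + t * Eb i)) * (ζt j + t * Ez j - (βt j + t * Eb j)) * (if P i = P j then Q i j else 0)
          = QF Qt (fun i => wt i + t * El i) (fun i => wt i + t * El i) := by
        simp only [QF, hQtdef]
        exact Finset.sum_congr rfl fun i _ => Finset.sum_congr rfl fun j _ => by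
          rw [h0 i, h0 j]
      rw [step]
      exact QF_expand Qt wt El t
    have q2 : ∑ i, (ζt i + t * Ez i)^2
        = ∑ i, (ζt i)^2 + t * (2 * ∑ i, ζt i * Ez i) + t^2 * ∑ i, (Ez i)^2 :=
      sum_sq_expand ζt Ez t
    have q3 : ∑ i, (βt i + t * Eb i)^2
        = ∑ i, (βt i)^2 + t * (2 * ∑ i, βt i * Eb i) + t^2 * ∑ i, (Eb i)^2 :=
      sum_sq_expand βt Eb t
    have q4 : ∑ i, (ζt i + t * Ez i) = ∑ i, ζt i + t * ∑ i, Ez i := sum_lin_expand ζt Ez t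
    have q5 : ∑ i, (βt i + t * Eb i) = ∑ i, βt i + t * ∑ i, Eb i := sum_lin_expand βt Eb t
    rw [q0, q1, q2, q3, q4, q5] at h
    simp only [hL2def, hS2def]
    linarith only [h]
  have hL2nn : 0 ≤ L2 := by
    by_contra hneg
    push_neg at hneg
    have hd1 : 0 < (-L2) / (S2 + 1) := div_pos (by linarith only [hneg]) (by linarith only [hS2nn])
    have ht0pos : 0 < min 1 ((-L2) / (S2 + 1)) := lt_min one_pos hd1
    have hk := hkey2 _ ht0pos (min_le_left _ _)
    have h2 : (min 1 ((-L2) / (S2 + 1))) * S2 ≤ ((-L2) / (S2 + 1)) * S2 :=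
      mul_le_mul_of_nonneg_right (min_le_right _ _) hS2nn
    have h3 : ((-L2) / (S2 + 1)) * S2 < -L2 := by
      rw [div_mul_eq_mul_div, div_lt_iff₀ (by linarith only [hS2nn] : (0:ℝ) < S2+1)]
      have hstep := mul_lt_mul_of_pos_left (lt_add_one S2) (by linarith only [hneg] : (0:ℝ) < -L2)
      linarith only [hstep]
    have h4 : L2 + (min 1 ((-L2) / (S2 + 1))) * S2 < 0 := by linarith only [h2, h3, hneg]
    have h5 := mul_lt_mul_of_pos_left h4 ht0pos
    rw [mul_zero] at h5
    have h6 : (min 1 ((-L2) / (S2 + 1))) * (L2 + (min 1 ((-L2) / (S2 + 1))) * S2)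
        = (min 1 ((-L2) / (S2 + 1))) * L2 + (min 1 ((-L2) / (S2 + 1)))^2 * S2 := by
      ring
    rw [h6] at h5
    linarith only [hk, h5]
  -- combine the two first-order conditions
  have sA : QF Qm w dl = QF Qm dl w := QF_swap Qm hQmsym w dl
  have sB : QF Qt wt El = QF Qt El wt := QF_swap Qt hQtsym wt El
  have sC : QF Qt El wt = - QF Qt dl wt := by
    rw [hElneg, QF_neg_left]
  have sD : ∑ i, Ez i = - ∑ i, Dz i := by
    rw [← Finset.sum_neg_distrib]
    exact Finset.sum_congr rfl fun i _ => by simp only [hEzdef, hDzdef]; ring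
  have sE : ∑ i, Eb i = - ∑ i, Db i := by
    rw [← Finset.sum_neg_distrib]
    exact Finset.sum_congr rfl fun i _ => by simp only [hEbdef, hDbdef]; ring
  have sF : ∑ i, ζt i * Ez i = - ∑ i, ζt i * Dz i := by
    rw [← Finset.sum_neg_distrib]
    exact Finset.sum_congr rfl fun i _ => by simp only [hEzdef, hDzdef]; ring
  have sG : ∑ i, βt i * Eb i = - ∑ i, βt i * Db i := by
    rw [← Finset.sum_neg_distrib]
    exact Finset.sum_congr rfl fun i _ => by simp only [hEbdef, hDbdef]; ring
  have hLL : L1 + L2 = QF Qm dl w - QF Qt dl wt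
      + c * (υ * ((M:ℝ) * ∑ i, ζs i * Dz i - (m:ℝ) * ∑ i, ζt i * Dz i)
           + ((M:ℝ) * ∑ i, βs i * Db i - (m:ℝ) * ∑ i, βt i * Db i)) := by
    rw [hL1def, hL2def]
    linear_combination (1/2:ℝ) * sA + (1/2:ℝ) * sB + sC + (θ-1) * sD + (θ+1) * sE
      + ((m:ℝ)*c*υ) * sF + ((m:ℝ)*c) * sG
  have hsum2 : 0 ≤ QF Qm dl w - QF Qt dl wt
      + c * (υ * ((M:ℝ) * ∑ i, ζs i * Dz i - (m:ℝ) * ∑ i, ζt i * Dz i)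
           + ((M:ℝ) * ∑ i, βs i * Db i - (m:ℝ) * ∑ i, βt i * Db i)) := by
    have := add_nonneg hL1nn hL2nn
    rw [hLL] at this
    exact this
  have e1 : ∑ i, (Dz i)^2 + ∑ i, ζs i * Dz i = ∑ i, ζt i * Dz i := by
    rw [← Finset.sum_add_distrib]
    exact Finset.sum_congr rfl fun i _ => by simp only [hDzdef]; ring
  have e2 : ∑ i, (Db i)^2 + ∑ i, βs i * Db i = ∑ i, βt i * Db i := by
    rw [← Finset.sum_add_distrib]
    exact Finset.sum_congr rfl fun i _ => by simp only [hDbdef]; ring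
  have hstep : (M:ℝ)*c*(υ * ∑ i, (Dz i)^2 + ∑ i, (Db i)^2)
      ≤ ((M:ℝ)-(m:ℝ))*c*(υ * ∑ i, ζt i * Dz i + ∑ i, βt i * Db i)
        + (QF Qm dl w - QF Qt dl wt) := by
    have e1' : (M:ℝ)*c*υ*(∑ i, (Dz i)^2)
        = (M:ℝ)*c*υ*(∑ i, ζt i * Dz i) - (M:ℝ)*c*υ*(∑ i, ζs i * Dz i) := by
      linear_combination ((M:ℝ)*c*υ) * e1
    have e2' : (M:ℝ)*c*(∑ i, (Db i)^2)
        = (M:ℝ)*c*(∑ i, βt i * Db i) - (M:ℝ)*c*(∑ i, βs i * Db i) := by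
      linear_combination ((M:ℝ)*c) * e2
    linarith only [hsum2, e1', e2']
  -- the key identity with sharp constant
  have i1 : QF Qm dl w = QF Qt dl w + QF Rm dl w := QF_ker_split Qm Qt Rm hker dl w
  have hwt1 : wt = fun i => w i + 1 * dl i := by
    funext i; simp only [hdldef]; ring
  have i2 : QF Qt dl wt = QF Qt dl w + QF Qt dl dl := by
    rw [hwt1]
    have h := QF_add_right Qt dl w (fun i => 1 * dl i)
    have h2 : QF Qt dl (fun i => 1 * dl i) = QF Qt dl dl := by
      have : (fun i => (1:ℝ) * dl i) = dl := by funext i; ring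
      rw [this]
    calc QF Qt dl (fun i => w i + 1 * dl i) = QF Qt dl w + QF Qt dl (fun i => 1 * dl i) := by
          have e : (fun i => w i + 1 * dl i) = (fun i => w i + (fun i => (1:ℝ) * dl i) i) := rfl
          rw [e, QF_add_right]
    _ = QF Qt dl w + QF Qt dl dl := by rw [h2]
  have i3 : QF Rm wt wt = QF Rm w w + 1 * (QF Rm dl w + QF Rm w dl) + 1^2 * QF Rm dl dl := by
    rw [hwt1]
    exact QF_expand Rm w dl 1
  have i4 : QF Rm w dl = QF Rm dl w := QF_swap Rm hRmsym w dl
  have i5 : QF Qm dl dl = QF Qt dl dl + QF Rm dl dl := QF_ker_split Qm Qt Rm hker dl dl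
  have hcid : QF Qm dl w - QF Qt dl wt
      = (1/2)*(QF Rm wt wt - QF Rm w w) - (1/2)*(QF Qm dl dl + QF Qt dl dl) := by
    linear_combination i1 - i2 - (1/2:ℝ) * i3 - (1/2:ℝ) * i4 + (1/2:ℝ) * i5
  -- bounds on the off-block quadratic forms
  have habs_wt : ∀ i, |wt i| ≤ U := by
    intro i
    simp only [hwtdef]
    rw [abs_sub_le_iff]
    constructor
    · linarith only [hζt i, hβt i, hztU i]
    · linarith only [hζt i, hβt i, hbtU i]
  have habs_w : ∀ i, |w i| ≤ U := by
    intro i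
    simp only [hwdef]
    rw [abs_sub_le_iff]
    constructor
    · linarith only [hζs i, hβs i, hzsU i]
    · linarith only [hζs i, hβs i, hbsU i]
  have hRbound : ∀ (v : Fin M → ℝ), (∀ i, |v i| ≤ U) → |QF Rm v v| ≤ U^2 * Qhat := by
    intro v hv
    rw [hQhat]
    calc |QF Rm v v| ≤ ∑ i, |∑ j, v i * v j * Rm i j| := by
          rw [QF]; exact Finset.abs_sum_le_sum_abs _ _
    _ ≤ ∑ i, ∑ j, |v i * v j * Rm i j| :=
        Finset.sum_le_sum fun i _ => Finset.abs_sum_le_sum_abs _ _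
    _ ≤ ∑ i, ∑ j, U^2 * (if P i ≠ P j then |Q i j| else 0) := by
        refine Finset.sum_le_sum fun i _ => Finset.sum_le_sum fun j _ => ?_
        simp only [hRmdef]
        by_cases h : P i = P j
        · rw [if_pos h, if_neg (fun hh => hh h)]
          simp
        · rw [if_neg h, if_pos h]
          rw [abs_mul, abs_mul]
          have h1 := hv i; have h2 := hv j
          have h3 := abs_nonneg (Q i j)
          have h5 := abs_nonneg (v j)
          have h6 : |v i| * |v j| ≤ U * U := mul_le_mul h1 h2 h5 hU0
          calc |v i| * |v j| * |Q i j| ≤ U * U * |Q i j| :=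
                mul_le_mul_of_nonneg_right h6 h3
            _ = U^2 * |Q i j| := by ring
    _ = U^2 * ∑ i, ∑ j, (if P i ≠ P j then |Q i j| else 0) := by
        rw [Finset.mul_sum]
        exact Finset.sum_congr rfl fun i _ => by rw [Finset.mul_sum]
  have hY1 : QF Rm wt wt ≤ U^2 * Qhat :=
    le_trans (le_abs_self _) (hRbound wt habs_wt)
  have hY2 : -(U^2 * Qhat) ≤ QF Rm w w :=
    neg_le_of_neg_le (by linarith only [abs_le.mp (hRbound w habs_w)])
  -- bound on the regularization cross term, using complementarity
  have hT2 : υ * ∑ i, ζt i * Dz i + ∑ i, βt i * Db i ≤ (M:ℝ) * U^2 := by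
    have hsum : υ * ∑ i, ζt i * Dz i + ∑ i, βt i * Db i
        = ∑ i, (υ * (ζt i * Dz i) + βt i * Db i) := by
      rw [Finset.mul_sum, ← Finset.sum_add_distrib]
    rw [hsum]
    calc ∑ i, (υ * (ζt i * Dz i) + βt i * Db i) ≤ ∑ _i : Fin M, U^2 := by
          refine Finset.sum_le_sum fun i _ => ?_
          rcases hcomp i with h | h
          · rw [h]
            simp only [hDbdef]
            have h1 := hβs i; have h2 := hβt i; have h3 := hbtU i
            have k1 : βt i * (βt i - βs i) ≤ βt i * βt i :=
              mul_le_mul_of_nonneg_left (by linarith only [h1]) h2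
            have k2 : βt i * βt i ≤ U * U := mul_le_mul h3 h3 h2 hU0
            linarith only [k1, k2]
          · rw [h]
            simp only [hDzdef]
            have h1 := hζs i; have h2 := hζt i; have h3 := hztU i
            have h4 := hυ0.le
            have k1 : ζt i * (ζt i - ζs i) ≤ ζt i * ζt i :=
              mul_le_mul_of_nonneg_left (by linarith only [h1]) h2
            have k2 : υ * (ζt i * (ζt i - ζs i)) ≤ υ * (ζt i * ζt i) :=
              mul_le_mul_of_nonneg_left k1 h4
            have k3 : υ * (ζt i * ζt i) ≤ 1 * (ζt i * ζt i) :=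
              mul_le_mul_of_nonneg_right hυ1 (mul_nonneg h2 h2)
            have k4 : ζt i * ζt i ≤ U * U := mul_le_mul h3 h3 h2 hU0
            linarith only [k2, k3, k4]
    _ = (M:ℝ) * U^2 := by
        rw [Finset.sum_const, Finset.card_univ, Fintype.card_fin, nsmul_eq_mul]
  have hT2' : ((M:ℝ)-(m:ℝ))*c*(υ * ∑ i, ζt i * Dz i + ∑ i, βt i * Db i)
      ≤ ((M:ℝ)-(m:ℝ))*c*((M:ℝ) * U^2) := by
    have hnn : (0:ℝ) ≤ ((M:ℝ)-(m:ℝ))*c :=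
      mul_nonneg (by linarith only [hmMR]) hc.le
    exact mul_le_mul_of_nonneg_left hT2 hnn
  have hchain : (M:ℝ)*c*(υ * ∑ i, (Dz i)^2 + ∑ i, (Db i)^2)
      ≤ U^2 * Qhat + (M:ℝ)*((M:ℝ)-(m:ℝ))*c*U^2 := by
    linarith only [hstep, hcid, hY1, hY2, hA, hB, hT2']
  have hDb2nn : 0 ≤ ∑ i, (Db i)^2 := Finset.sum_nonneg fun i _ => sq_nonneg _
  have hfin : (M:ℝ)*c*υ*(∑ i, (Dz i)^2 + ∑ i, (Db i)^2)
      ≤ U^2 * Qhat + (M:ℝ)*((M:ℝ)-(m:ℝ))*c*U^2 := by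
    have hx : 0 ≤ (M:ℝ)*c*(∑ i, (Db i)^2)*(1-υ) := by
      apply mul_nonneg
      apply mul_nonneg
      apply mul_nonneg hMR.le hc.le
      exact hDb2nn
      linarith only [hυ1]
    linarith only [hchain, hx]
  -- conclude
  have hlhs : ∑ x : Fin M ⊕ Fin M, (Sum.elim ζt βt x - Sum.elim ζs βs x)^2
      = ∑ i, (Dz i)^2 + ∑ i, (Db i)^2 := by
    rw [Fintype.sum_sum_type]
    congr 1
    all_goals
      exact Finset.sum_congr rfl fun i _ => by
        simp only [Sum.elim_inl, Sum.elim_inr, hDzdef, hDbdef]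
  rw [hlhs]
  have hpos : 0 < (M:ℝ)*c*υ := mul_pos (mul_pos hMR hc) hυ0
  rw [div_mul_eq_mul_div, le_div_iff₀ hpos]
  linarith only [hfin]
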